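/- Let M be a topological space, T : M → M a map, and φ = (φ₁, …, φₙ) : M → ℂ^n an injective continuous map which is a homeomorphism onto its image φ(M), such that each component is a Koopman eigenfunction, φⱼ ∘ T = λⱼ φⱼ, with |λⱼ| < 1 for all j, and such that 0 ∈ φ(M). Then the point m* ∈ M with φ(m*) = 0 is a fixed point of T (T m* = m*), and it is globally attracting: for every m₀ ∈ M the orbit T^k m₀ converges to m* as k → ∞. -/

import Mathlib

open Filter

/-- If `φ : M → ℂⁿ` is injective, continuous, a homeomorphism onto its image,
each component a Koopman eigenfunction with `|λⱼ| < 1`, and `0 ∈ φ(M)`, then the point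
`m*` with `φ(m*) = 0` is a globally attracting fixed point of `T`. -/
theorem stmt9 {M : Type*} [TopologicalSpace M] {n : ℕ} (T : M → M)
    (φ : M → Fin n → ℂ) (hcont : Continuous φ) (hinj : Function.Injective φ)
    (hemb : Topology.IsEmbedding φ)
    (lam : Fin n → ℂ) (heig : ∀ j m, φ (T m) j = lam j * φ m j)
    (hlam : ∀ j, ‖lam j‖ < 1)
    (h0 : (0 : Fin n → ℂ) ∈ Set.range φ) :
    ∀ mstar : M, φ mstar = 0 →
      T mstar = mstar ∧
      ∀ m₀ : M, Tendsto (fun k => T^[k] m₀) atTop (nhds mstar) := by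
  intro mstar hstar
  have hiter : ∀ (m : M) (k : ℕ) (j : Fin n), φ (T^[k] m) j = lam j ^ k * φ m j := by
    intro m k
    induction k with
    | zero => intro j; simp
    | succ k ih =>
      intro j
      rw [Function.iterate_succ_apply', heig, ih, pow_succ]
      ring
  constructor
  · apply hinj
    funext j
    rw [heig, hstar]
    simp
  · intro m₀
    rw [hemb.tendsto_nhds_iff]
    rw [hstar]
    rw [tendsto_pi_nhds]
    intro j
    have h1 : Tendsto (fun k : ℕ => lam j ^ k * φ m₀ j) atTop (nhds 0) := by
      have := tendsto_pow_atTop_nhds_zero_of_norm_lt_one (x := lam j) (hlam j)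
      simpa using this.mul_const (φ m₀ j)
    simpa [Function.comp, hiter m₀] using h1
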